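/- Under Properties 1 and 2, the average iterate satisfies the normalized duality gap bound ρ_r(z̄^t) ≤ 2C·r/t with r = ‖z̄^t − z^0‖ (when r > 0), where ρ_r(z) = (1/r)·max_{ẑ ∈ Z, ‖ẑ−z‖ ≤ r} (L(x,ŷ) − L(x̂,y)). -/

import Mathlib

open Set Finset

/-- Under Properties 1 and 2 (and convex-concavity of `L`), the average iterate
`z̄^t` satisfies the normalized duality gap bound `ρ_r(z̄^t) ≤ 2C·r/t` with
`r = ‖z̄^t − z^0‖ > 0`, where
`ρ_r(z) = (1/r)·sup { L(x,ŷ) − L(x̂,y) : ẑ ∈ Z, ‖ẑ − z‖ ≤ r }` (semi-norm `p`). -/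
theorem average_iterate_normalized_gap_bound
    {E F : Type*} [AddCommGroup E] [Module ℝ E] [AddCommGroup F] [Module ℝ F]
    (p : Seminorm ℝ (E × F)) (X : Set E) (Y : Set F)
    (hXc : Convex ℝ X) (hYc : Convex ℝ Y) (L : E → F → ℝ)
    (hcvx : ∀ y ∈ Y, ConvexOn ℝ X (fun x => L x y))
    (hccv : ∀ x ∈ X, ConcaveOn ℝ Y (fun y => L x y))
    (zseq zhat : ℕ → E × F)
    (hzmem : ∀ t, zseq t ∈ X ×ˢ Y) (hzhmem : ∀ t, zhat t ∈ X ×ˢ Y)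
    (C : ℝ) (hC : 0 < C)
    (hprop1 : ∀ t : ℕ, ∀ z ∈ X ×ˢ Y,
      L (zhat (t + 1)).1 z.2 - L z.1 (zhat (t + 1)).2 ≤
        C / 2 * p (z - zseq t) ^ 2 - C / 2 * p (z - zseq (t + 1)) ^ 2)
    (Zstar : Set (E × F)) (hne : Zstar.Nonempty) (hZsub : Zstar ⊆ X ×ˢ Y)
    (hZsaddle : ∀ zs ∈ Zstar, ∀ z ∈ X ×ˢ Y,
      L zs.1 z.2 ≤ L zs.1 zs.2 ∧ L zs.1 zs.2 ≤ L z.1 zs.2)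
    (q : ℝ) (hq : 0 ≤ q)
    (hprop2 : ∀ t : ℕ,
      p (zhat (t + 1) - zseq (t + 1)) ≤
          q * sInf ((fun w => p (zseq (t + 1) - w)) '' Zstar) ∨
        p (zhat (t + 1) - zseq t) ≤ q * sInf ((fun w => p (zseq t - w)) '' Zstar)) :
    ∀ t : ℕ, 1 ≤ t → ∀ zbar : E × F,
      zbar = (t : ℝ)⁻¹ • ∑ i ∈ Finset.range t, zhat (i + 1) →
      0 < p (zbar - zseq 0) →
      (1 / p (zbar - zseq 0)) *
          sSup ((fun w : E × F => L zbar.1 w.2 - L w.1 zbar.2) ''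
            {w | w ∈ X ×ˢ Y ∧ p (w - zbar) ≤ p (zbar - zseq 0)}) ≤
        2 * C * p (zbar - zseq 0) / t := by

  intro t ht zbar hzbar hr
  have htpos : (0:ℝ) < t := by exact_mod_cast ht
  have htne : (t:ℝ) ≠ 0 := ne_of_gt htpos
  set r := p (zbar - zseq 0) with hrdef
  have hz1 : zbar.1 = ∑ i ∈ Finset.range t, (t:ℝ)⁻¹ • (zhat (i+1)).1 := by
    rw [hzbar, ← Finset.smul_sum, Prod.smul_fst, Prod.fst_sum]
  have hz2 : zbar.2 = ∑ i ∈ Finset.range t, (t:ℝ)⁻¹ • (zhat (i+1)).2 := by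
    rw [hzbar, ← Finset.smul_sum, Prod.smul_snd, Prod.snd_sum]
  have hwsum : ∑ _i ∈ Finset.range t, (t:ℝ)⁻¹ = 1 := by
    rw [Finset.sum_const, Finset.card_range, nsmul_eq_mul]
    field_simp
  have key : ∀ w ∈ {w : E × F | w ∈ X ×ˢ Y ∧ p (w - zbar) ≤ r},
      L zbar.1 w.2 - L w.1 zbar.2 ≤ 2*C*r^2/t := by
    intro w hw
    obtain ⟨hwmem, hwr⟩ := hw
    have hwX : w.1 ∈ X := hwmem.1
    have hwY : w.2 ∈ Y := hwmem.2
    have tele : ∑ i ∈ Finset.range t,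
        (L (zhat (i+1)).1 w.2 - L w.1 (zhat (i+1)).2) ≤ C/2 * p (w - zseq 0)^2 := by
      calc ∑ i ∈ Finset.range t, (L (zhat (i+1)).1 w.2 - L w.1 (zhat (i+1)).2)
          ≤ ∑ i ∈ Finset.range t,
              (C/2 * p (w - zseq i)^2 - C/2 * p (w - zseq (i+1))^2) :=
            Finset.sum_le_sum (fun i _ => hprop1 i w hwmem)
        _ = C/2 * p (w - zseq 0)^2 - C/2 * p (w - zseq t)^2 :=
            Finset.sum_range_sub' (fun i => C/2 * p (w - zseq i)^2) t
        _ ≤ C/2 * p (w - zseq 0)^2 := by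
            nlinarith [sq_nonneg (p (w - zseq t)), hC.le]
    have hnorm : p (w - zseq 0) ≤ 2 * r := by
      have heq : w - zseq 0 = (w - zbar) + (zbar - zseq 0) := by abel
      calc p (w - zseq 0) = p ((w - zbar) + (zbar - zseq 0)) := by rw [heq]
        _ ≤ p (w - zbar) + p (zbar - zseq 0) := map_add_le_add p _ _
        _ ≤ 2 * r := by rw [← hrdef]; linarith
    have hjc : L zbar.1 w.2 ≤ ∑ i ∈ Finset.range t, (t:ℝ)⁻¹ • L (zhat (i+1)).1 w.2 := by
      rw [hz1]
      exact (hcvx w.2 hwY).map_sum_le (fun i _ => by positivity) hwsum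
        (fun i _ => (hzhmem (i+1)).1)
    have hjv : ∑ i ∈ Finset.range t, (t:ℝ)⁻¹ • L w.1 (zhat (i+1)).2 ≤ L w.1 zbar.2 := by
      rw [hz2]
      exact (hccv w.1 hwX).le_map_sum (fun i _ => by positivity) hwsum
        (fun i _ => (hzhmem (i+1)).2)
    have hsplit : L zbar.1 w.2 - L w.1 zbar.2 ≤
        (t:ℝ)⁻¹ * ∑ i ∈ Finset.range t, (L (zhat (i+1)).1 w.2 - L w.1 (zhat (i+1)).2) := by
      have : (t:ℝ)⁻¹ * ∑ i ∈ Finset.range t, (L (zhat (i+1)).1 w.2 - L w.1 (zhat (i+1)).2)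
          = (∑ i ∈ Finset.range t, (t:ℝ)⁻¹ • L (zhat (i+1)).1 w.2)
            - ∑ i ∈ Finset.range t, (t:ℝ)⁻¹ • L w.1 (zhat (i+1)).2 := by
        rw [Finset.mul_sum, ← Finset.sum_sub_distrib]
        simp [smul_eq_mul, mul_sub]
      linarith [hjc, hjv, this.ge]
    have hqb : p (w - zseq 0)^2 ≤ 4 * r^2 := by
      nlinarith [apply_nonneg p (w - zseq 0)]
    calc L zbar.1 w.2 - L w.1 zbar.2
        ≤ (t:ℝ)⁻¹ * ∑ i ∈ Finset.range t, (L (zhat (i+1)).1 w.2 - L w.1 (zhat (i+1)).2) :=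
          hsplit
      _ ≤ (t:ℝ)⁻¹ * (C/2 * p (w - zseq 0)^2) := by
          apply mul_le_mul_of_nonneg_left tele (by positivity)
      _ ≤ 2*C*r^2/t := by
          have hb : C/2 * p (w - zseq 0)^2 ≤ 2*C*r^2 := by nlinarith
          have h3 : 2*C*r^2/(t:ℝ) = (t:ℝ)⁻¹ * (2*C*r^2) := by ring
          rw [h3]
          exact mul_le_mul_of_nonneg_left hb (inv_pos.mpr htpos).le
  have hsup : sSup ((fun w : E × F => L zbar.1 w.2 - L w.1 zbar.2) ''
      {w | w ∈ X ×ˢ Y ∧ p (w - zbar) ≤ r}) ≤ 2*C*r^2/t := by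
    apply Real.sSup_le _ (by positivity)
    rintro x ⟨w, hw, rfl⟩
    exact key w hw
  have h1 : (1/r) * sSup ((fun w : E × F => L zbar.1 w.2 - L w.1 zbar.2) ''
      {w | w ∈ X ×ˢ Y ∧ p (w - zbar) ≤ r}) ≤ (1/r) * (2*C*r^2/t) :=
    mul_le_mul_of_nonneg_left hsup (by positivity)
  have h2 : (1/r) * (2*C*r^2/t) = 2*C*r/t := by
    field_simp
  linarith
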